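/- arXiv:2310.06944 — 6 statements merged into one kernel-verified Lean document; each statement's English description precedes it below -/
import Mathlib

section
/- Let V be a hypervector space over K and (G,B) a bipolar fuzzy soft set of V. Then (G,B) is a bipolar fuzzy soft hypervector space of V if and only if the following three conditions hold for all e ∈ B, x ∈ V and b ∈ K: (1) (G+G)_e^+(x) ≤ G_e^+(x) and (G+G)_e^-(x) ≥ G_e^-(x); (2) G_e^+(−x) ≤ G_e^+(x) and G_e^-(−x) ≥ G_e^-(x); (3) (b∘G)_e^+(x) ≤ G_e^+(x) and (b∘G)_e^-(x) ≥ G_e^-(x). -/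
open Set Classical

variable {K V E : Type*}

/-- A hypervector space (Scafati-Tallini): an abelian group `V` over a field `K`
with an external hyperoperation satisfying (H1)-(H5). -/
structure HVS (K V : Type*) [Field K] [AddCommGroup V] where
  ho : K → V → Set V
  ho_nonempty : ∀ b y, (ho b y).Nonempty
  h1 : ∀ b (y z : V), ho b (y + z) ⊆ Set.image2 (· + ·) (ho b y) (ho b z)
  h2 : ∀ (b c : K) (y : V), ho (b + c) y ⊆ Set.image2 (· + ·) (ho b y) (ho c y)
  h3 : ∀ (b c : K) (y : V), (⋃ p ∈ ho c y, ho b p) = ho (b * c) y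
  h4a : ∀ (b : K) (y : V), ho b (-y) = ho (-b) y
  h4b : ∀ (b : K) (y : V), ho (-b) y = -(ho b y)
  h5 : ∀ y : V, y ∈ ho 1 y

/-- `(Gp, Gm)` is a bipolar fuzzy soft set: `Gp e : V → [0,1]`, `Gm e : V → [-1,0]`. -/
def IsBFS (Gp Gm : E → V → ℝ) : Prop :=
  ∀ e x, Gp e x ∈ Set.Icc (0:ℝ) 1 ∧ Gm e x ∈ Set.Icc (-1:ℝ) 0

/-- Bipolar fuzzy soft hypervector space. -/
def IsBFSHVS [Field K] [AddCommGroup V] (H : HVS K V) (Gp Gm : E → V → ℝ) : Prop :=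
  (∀ e (y z : V), min (Gp e y) (Gp e z) ≤ Gp e (y - z)) ∧
  (∀ e (y z : V), Gm e (y - z) ≤ max (Gm e y) (Gm e z)) ∧
  (∀ e (b : K) (y : V), Gp e y ≤ sInf (Gp e '' H.ho b y)) ∧
  (∀ e (b : K) (y : V), sSup (Gm e '' H.ho b y) ≤ Gm e y)

/-- Positive part of the sum of two bipolar fuzzy soft sets. -/
noncomputable def sumP [AddCommGroup V] (Fp Hp : E → V → ℝ) (e : E) (x : V) : ℝ :=
  sSup {t | ∃ y z : V, y + z = x ∧ t = min (Fp e y) (Hp e z)}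

/-- Negative part of the sum of two bipolar fuzzy soft sets. -/
noncomputable def sumM [AddCommGroup V] (Fm Hm : E → V → ℝ) (e : E) (x : V) : ℝ :=
  sInf {t | ∃ y z : V, y + z = x ∧ t = max (Fm e y) (Hm e z)}

/-- Positive part of the scalar product `b ∘ G` (real `sSup` gives `0` on the empty set). -/
noncomputable def smulP [Field K] [AddCommGroup V] (H : HVS K V) (b : K)
    (Gp : E → V → ℝ) (e : E) (x : V) : ℝ :=
  sSup {t | ∃ r : V, x ∈ H.ho b r ∧ t = Gp e r}

/-- Negative part of the scalar product `b ∘ G` (real `sInf` gives `0` on the empty set). -/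
noncomputable def smulM [Field K] [AddCommGroup V] (H : HVS K V) (b : K)
    (Gm : E → V → ℝ) (e : E) (x : V) : ℝ :=
  sInf {t | ∃ r : V, x ∈ H.ho b r ∧ t = Gm e r}

/-- Closure conditions of a subhyperspace (the empty set vacuously satisfies them). -/
def IsSHS [Field K] [AddCommGroup V] (H : HVS K V) (W : Set V) : Prop :=
  (∀ x ∈ W, ∀ y ∈ W, x - y ∈ W) ∧ ∀ x ∈ W, ∀ b : K, H.ho b x ⊆ W

theorem stmt_3 [Field K] [AddCommGroup V] (H : HVS K V) (Gp Gm : E → V → ℝ)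
    (hb : IsBFS Gp Gm) :
    IsBFSHVS H Gp Gm ↔
      ((∀ (e : E) (x : V), sumP Gp Gp e x ≤ Gp e x ∧ Gm e x ≤ sumM Gm Gm e x) ∧
       (∀ (e : E) (x : V), Gp e (-x) ≤ Gp e x ∧ Gm e x ≤ Gm e (-x)) ∧
       (∀ (b : K) (e : E) (x : V), smulP H b Gp e x ≤ Gp e x ∧ Gm e x ≤ smulM H b Gm e x)) := by

  constructor
  · rintro ⟨h1, h2, h3, h4⟩
    have hGp0 : ∀ e (x : V), Gp e x ≤ Gp e 0 := fun e x => by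
      have := h1 e x x; simpa using this
    have hGpneg : ∀ e (x : V), Gp e x ≤ Gp e (-x) := fun e x => by
      have := h1 e 0 x
      rw [zero_sub, min_eq_right (hGp0 e x)] at this
      exact this
    have hGm0 : ∀ e (x : V), Gm e 0 ≤ Gm e x := fun e x => by
      have := h2 e x x; simpa using this
    have hGmneg : ∀ e (x : V), Gm e (-x) ≤ Gm e x := fun e x => by
      have := h2 e 0 x
      rw [zero_sub, max_eq_right (hGm0 e x)] at this
      exact this
    have hGpadd : ∀ e (y z : V), min (Gp e y) (Gp e z) ≤ Gp e (y + z) := fun e y z => by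
      have := h1 e y (-z)
      rw [sub_neg_eq_add] at this
      exact le_trans (min_le_min le_rfl (hGpneg e z)) this
    have hGmadd : ∀ e (y z : V), Gm e (y + z) ≤ max (Gm e y) (Gm e z) := fun e y z => by
      have := h2 e y (-z)
      rw [sub_neg_eq_add] at this
      exact this.trans (max_le_max le_rfl (hGmneg e z))
    refine ⟨fun e x => ⟨?_, ?_⟩, fun e x => ⟨?_, ?_⟩, fun b e x => ⟨?_, ?_⟩⟩
    · apply Real.sSup_le _ (hb e x).1.1
      rintro t ⟨y, z, hyz, rfl⟩
      rw [← hyz]; exact hGpadd e y z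
    · have hne : {t | ∃ y z : V, y + z = x ∧ t = max (Gm e y) (Gm e z)}.Nonempty :=
        ⟨_, x, 0, add_zero x, rfl⟩
      apply le_csInf hne
      rintro t ⟨y, z, hyz, rfl⟩
      rw [← hyz]; exact hGmadd e y z
    · have := hGpneg e (-x); rwa [neg_neg] at this
    · have := hGmneg e (-x); rwa [neg_neg] at this
    · apply Real.sSup_le _ (hb e x).1.1
      rintro t ⟨r, hr, rfl⟩
      calc Gp e r ≤ sInf (Gp e '' H.ho b r) := h3 e b r
        _ ≤ Gp e x := csInf_le ⟨0, by rintro s ⟨v, _, rfl⟩; exact (hb e v).1.1⟩ ⟨x, hr, rfl⟩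
    · rcases Set.eq_empty_or_nonempty {t | ∃ r : V, x ∈ H.ho b r ∧ t = Gm e r} with hS | hS
      · rw [smulM, hS, Real.sInf_empty]; exact (hb e x).2.2
      · apply le_csInf hS
        rintro t ⟨r, hr, rfl⟩
        calc Gm e x ≤ sSup (Gm e '' H.ho b r) :=
              le_csSup ⟨0, by rintro s ⟨v, _, rfl⟩; exact (hb e v).2.2⟩ ⟨x, hr, rfl⟩
          _ ≤ Gm e r := h4 e b r
  · rintro ⟨c1, c2, c3⟩
    have hpneg : ∀ e (z : V), Gp e z ≤ Gp e (-z) := fun e z => by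
      have := (c2 e (-z)).1; rwa [neg_neg] at this
    have hmneg : ∀ e (z : V), Gm e (-z) ≤ Gm e z := fun e z => by
      have := (c2 e (-z)).2; rwa [neg_neg] at this
    have bddP : ∀ (S : Set ℝ), (∀ t ∈ S, t ≤ 1) → BddAbove S := fun S h => ⟨1, h⟩
    refine ⟨fun e y z => ?_, fun e y z => ?_, fun e b y => ?_, fun e b y => ?_⟩
    · calc min (Gp e y) (Gp e z) ≤ min (Gp e y) (Gp e (-z)) :=
            min_le_min le_rfl (hpneg e z)
        _ ≤ sumP Gp Gp e (y - z) := by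
            refine le_csSup ⟨1, ?_⟩ (show _ ∈ {t | ∃ a c : V, a + c = y - z ∧ t = min (Gp e a) (Gp e c)} from ⟨y, -z, (sub_eq_add_neg y z).symm, rfl⟩)
            rintro t ⟨a, c, _, rfl⟩
            exact le_trans (min_le_left _ _) (hb e a).1.2
        _ ≤ Gp e (y - z) := (c1 e (y - z)).1
    · calc Gm e (y - z) ≤ sumM Gm Gm e (y - z) := (c1 e (y - z)).2
        _ ≤ max (Gm e y) (Gm e (-z)) := by
            refine csInf_le ⟨-1, ?_⟩ (show _ ∈ {t | ∃ a c : V, a + c = y - z ∧ t = max (Gm e a) (Gm e c)} from ⟨y, -z, (sub_eq_add_neg y z).symm, rfl⟩)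
            rintro t ⟨a, c, _, rfl⟩
            exact le_trans (hb e a).2.1 (le_max_left _ _)
        _ ≤ max (Gm e y) (Gm e z) := max_le_max le_rfl (hmneg e z)
    · obtain ⟨r, hr⟩ := H.ho_nonempty b y
      have hne : (Gp e '' H.ho b y).Nonempty := ⟨Gp e r, r, hr, rfl⟩
      apply le_csInf hne
      rintro t ⟨s, hs, rfl⟩
      calc Gp e y ≤ smulP H b Gp e s := by
            refine le_csSup ⟨1, ?_⟩ (show _ ∈ {t | ∃ r : V, s ∈ H.ho b r ∧ t = Gp e r} from ⟨y, hs, rfl⟩)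
            rintro t ⟨a, _, rfl⟩; exact (hb e a).1.2
        _ ≤ Gp e s := (c3 b e s).1
    · obtain ⟨r, hr⟩ := H.ho_nonempty b y
      have hne : (Gm e '' H.ho b y).Nonempty := ⟨Gm e r, r, hr, rfl⟩
      apply csSup_le hne
      rintro t ⟨s, hs, rfl⟩
      calc Gm e s ≤ smulM H b Gm e s := (c3 b e s).2
        _ ≤ Gm e y := by
            refine csInf_le ⟨-1, ?_⟩ (show _ ∈ {t | ∃ r : V, s ∈ H.ho b r ∧ t = Gm e r} from ⟨y, hs, rfl⟩)
            rintro t ⟨a, _, rfl⟩; exact (hb e a).2.1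
end

section
/- Let V be an invertible hypervector space over K (i.e., for all nonzero b ∈ K, x ∈ b∘y implies y ∈ b⁻¹∘x). If (G,B) is a bipolar fuzzy soft hypervector space of V, then for all e ∈ B, y ∈ V and nonzero b ∈ K: (b∘G)_e^+(y) ≥ G_e^+(y) and (b∘G)_e^-(y) ≤ G_e^-(y). -/
open Set Classical

variable {K V E : Type*}

theorem stmt_4 [Field K] [AddCommGroup V] (H : HVS K V)
    (hinv : ∀ b : K, b ≠ 0 → ∀ x y : V, x ∈ H.ho b y → y ∈ H.ho b⁻¹ x)
    (Gp Gm : E → V → ℝ) (hb : IsBFS Gp Gm) (h : IsBFSHVS H Gp Gm) :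
    ∀ (e : E) (y : V) (b : K), b ≠ 0 →
      Gp e y ≤ smulP H b Gp e y ∧ smulM H b Gm e y ≤ Gm e y := by
  intro e y b hb0
  obtain ⟨x, hx⟩ := H.ho_nonempty b⁻¹ y
  have hyx : y ∈ H.ho b x := by
    have := hinv b⁻¹ (inv_ne_zero hb0) x y hx
    rwa [inv_inv] at this
  -- Gp e y ≤ Gp e x
  have hGpx : Gp e y ≤ Gp e x := by
    have h1 := h.2.2.1 e b⁻¹ y
    have : sInf (Gp e '' H.ho b⁻¹ y) ≤ Gp e x := by
      apply csInf_le
      · exact ⟨0, fun t ⟨r, _, ht⟩ => ht ▸ (hb e r).1.1⟩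
      · exact ⟨x, hx, rfl⟩
    linarith
  have hGmx : Gm e x ≤ Gm e y := by
    have h1 := h.2.2.2 e b⁻¹ y
    have : Gm e x ≤ sSup (Gm e '' H.ho b⁻¹ y) := by
      apply le_csSup
      · exact ⟨0, fun t ⟨r, _, ht⟩ => ht ▸ (hb e r).2.2⟩
      · exact ⟨x, hx, rfl⟩
    linarith
  constructor
  · calc Gp e y ≤ Gp e x := hGpx
      _ ≤ smulP H b Gp e y := by
        apply le_csSup
        · exact ⟨1, fun t ⟨r, _, ht⟩ => ht ▸ (hb e r).1.2⟩
        · exact ⟨x, hyx, rfl⟩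
  · have : smulM H b Gm e y ≤ Gm e x := by
      apply csInf_le
      · exact ⟨-1, fun t ⟨r, _, ht⟩ => ht ▸ (hb e r).2.1⟩
      · exact ⟨x, hyx, rfl⟩
    linarith
end

section
/- Let V be an invertible, strongly right distributive hypervector space over K. If (G,C) and (H,C) are bipolar fuzzy soft hypervector spaces of V, then for every nonzero b ∈ K, b∘((G,C)+(H,C)) = b∘(G,C) + b∘(H,C); that is, for all e ∈ C and x ∈ V, (b∘(G+H))_e^+(x) = (b∘G + b∘H)_e^+(x) and (b∘(G+H))_e^-(x) = (b∘G + b∘H)_e^-(x). -/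
open Set Classical

variable {K V E : Type*}

theorem stmt_5 [Field K] [AddCommGroup V] (H : HVS K V)
    (hinv : ∀ b : K, b ≠ 0 → ∀ x y : V, x ∈ H.ho b y → y ∈ H.ho b⁻¹ x)
    (hsrd : ∀ (b : K) (y z : V), H.ho b (y + z) = Set.image2 (· + ·) (H.ho b y) (H.ho b z))
    (Gp Gm Hp Hm : E → V → ℝ) (hbG : IsBFS Gp Gm) (hbH : IsBFS Hp Hm)
    (hG : IsBFSHVS H Gp Gm) (hH : IsBFSHVS H Hp Hm) :
    ∀ b : K, b ≠ 0 → ∀ (e : E) (x : V),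
      smulP H b (sumP Gp Hp) e x = sumP (smulP H b Gp) (smulP H b Hp) e x ∧
      smulM H b (sumM Gm Hm) e x = sumM (smulM H b Gm) (smulM H b Hm) e x := by
  intro b hb e x
  -- every point is in some b ∘ r
  have hex : ∀ u : V, ∃ r : V, u ∈ H.ho b r := by
    intro u
    have h1 : u ∈ H.ho (b * b⁻¹) u := by rw [mul_inv_cancel₀ hb]; exact H.h5 u
    rw [← H.h3 b b⁻¹ u] at h1
    obtain ⟨p, _, hup⟩ := Set.mem_iUnion₂.mp h1
    exact ⟨p, hup⟩
  have hGp1 : ∀ y, Gp e y ≤ 1 := fun y => ((hbG e y).1).2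
  have hGp0 : ∀ y, 0 ≤ Gp e y := fun y => ((hbG e y).1).1
  have hHp1 : ∀ y, Hp e y ≤ 1 := fun y => ((hbH e y).1).2
  have hGm1 : ∀ y, -1 ≤ Gm e y := fun y => ((hbG e y).2).1
  have hHm1 : ∀ y, -1 ≤ Hm e y := fun y => ((hbH e y).2).1
  -- bounds and basic inequalities for smulP
  have smulP_bdd : ∀ (Fp : E → V → ℝ), (∀ y, Fp e y ≤ 1) → ∀ u : V,
      BddAbove {t | ∃ r : V, u ∈ H.ho b r ∧ t = Fp e r} := by
    rintro Fp hF1 u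
    exact ⟨1, by rintro t ⟨r, _, rfl⟩; exact hF1 r⟩
  have smulP_ge : ∀ (Fp : E → V → ℝ), (∀ y, Fp e y ≤ 1) → ∀ (u r : V),
      u ∈ H.ho b r → Fp e r ≤ smulP H b Fp e u := by
    intro Fp hF1 u r hur
    exact le_csSup (smulP_bdd Fp hF1 u) ⟨r, hur, rfl⟩
  have smulP_le1 : ∀ (Fp : E → V → ℝ), (∀ y, Fp e y ≤ 1) → ∀ u : V,
      smulP H b Fp e u ≤ 1 := by
    intro Fp hF1 u
    obtain ⟨r, hr⟩ := hex u
    exact csSup_le ⟨Fp e r, r, hr, rfl⟩ (by rintro t ⟨r', _, rfl⟩; exact hF1 r')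
  have smulM_bdd : ∀ (Fm : E → V → ℝ), (∀ y, -1 ≤ Fm e y) → ∀ u : V,
      BddBelow {t | ∃ r : V, u ∈ H.ho b r ∧ t = Fm e r} := by
    rintro Fm hF1 u
    exact ⟨-1, by rintro t ⟨r, _, rfl⟩; exact hF1 r⟩
  have smulM_le : ∀ (Fm : E → V → ℝ), (∀ y, -1 ≤ Fm e y) → ∀ (u r : V),
      u ∈ H.ho b r → smulM H b Fm e u ≤ Fm e r := by
    intro Fm hF1 u r hur
    exact csInf_le (smulM_bdd Fm hF1 u) ⟨r, hur, rfl⟩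
  have smulM_ge1 : ∀ (Fm : E → V → ℝ), (∀ y, -1 ≤ Fm e y) → ∀ u : V,
      -1 ≤ smulM H b Fm e u := by
    intro Fm hF1 u
    obtain ⟨r, hr⟩ := hex u
    exact le_csInf ⟨Fm e r, r, hr, rfl⟩ (by rintro t ⟨r', _, rfl⟩; exact hF1 r')
  -- sumP facts
  have sumP_mem : ∀ y z : V, min (Gp e y) (Hp e z) ≤ sumP Gp Hp e (y + z) := by
    intro y z
    refine le_csSup ⟨1, ?_⟩ ⟨y, z, rfl, rfl⟩
    rintro t ⟨y', z', _, rfl⟩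
    exact le_trans (min_le_left _ _) (hGp1 y')
  have sumP_le1 : ∀ r : V, sumP Gp Hp e r ≤ 1 := by
    intro r
    refine csSup_le ⟨min (Gp e r) (Hp e 0), r, 0, add_zero r, rfl⟩ ?_
    rintro t ⟨y', z', _, rfl⟩
    exact le_trans (min_le_left _ _) (hGp1 y')
  have sumM_mem : ∀ y z : V, sumM Gm Hm e (y + z) ≤ max (Gm e y) (Hm e z) := by
    intro y z
    refine csInf_le ⟨-1, ?_⟩ ⟨y, z, rfl, rfl⟩
    rintro t ⟨y', z', _, rfl⟩
    exact le_trans (hGm1 y') (le_max_left _ _)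
  have sumM_ge1 : ∀ r : V, -1 ≤ sumM Gm Hm e r := by
    intro r
    refine le_csInf ⟨max (Gm e r) (Hm e 0), r, 0, add_zero r, rfl⟩ ?_
    rintro t ⟨y', z', _, rfl⟩
    exact le_trans (hGm1 y') (le_max_left _ _)
  constructor
  · -- positive part
    apply le_antisymm
    · -- smulP of sum ≤ sum of smulP
      obtain ⟨r₀, hr₀⟩ := hex x
      refine csSup_le ⟨sumP Gp Hp e r₀, r₀, hr₀, rfl⟩ ?_
      rintro t ⟨r, hr, rfl⟩
      refine csSup_le ⟨min (Gp e r) (Hp e 0), r, 0, add_zero r, rfl⟩ ?_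
      rintro s ⟨y, z, hyz, rfl⟩
      have hx2 : x ∈ Set.image2 (· + ·) (H.ho b y) (H.ho b z) := by
        rw [← hsrd, hyz]; exact hr
      obtain ⟨u, hu, v, hv, huv⟩ := Set.mem_image2.mp hx2
      have h1 : min (Gp e y) (Hp e z)
          ≤ min (smulP H b Gp e u) (smulP H b Hp e v) :=
        min_le_min (smulP_ge Gp hGp1 u y hu) (smulP_ge Hp hHp1 v z hv)
      refine h1.trans (le_csSup ⟨1, ?_⟩ ⟨u, v, huv, rfl⟩)
      rintro t ⟨u', v', _, rfl⟩
      exact le_trans (min_le_left _ _) (smulP_le1 Gp hGp1 u')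
    · -- sum of smulP ≤ smulP of sum
      have hAbdd : BddAbove {t | ∃ r : V, x ∈ H.ho b r ∧ t = sumP Gp Hp e r} :=
        ⟨1, by rintro t ⟨r, _, rfl⟩; exact sumP_le1 r⟩
      refine csSup_le ⟨min (smulP H b Gp e x) (smulP H b Hp e 0), x, 0, add_zero x, rfl⟩ ?_
      rintro t ⟨u, v, huv, rfl⟩
      by_contra hcon
      push_neg at hcon
      obtain ⟨ru, hru⟩ := hex u
      obtain ⟨rv, hrv⟩ := hex v
      obtain ⟨s1, hs1mem, hs1⟩ := exists_lt_of_lt_csSup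
        (⟨Gp e ru, ru, hru, rfl⟩ : Set.Nonempty {t | ∃ r : V, u ∈ H.ho b r ∧ t = Gp e r})
        (lt_of_lt_of_le hcon (min_le_left _ _))
      obtain ⟨y, hy, rfl⟩ := hs1mem
      obtain ⟨s2, hs2mem, hs2⟩ := exists_lt_of_lt_csSup
        (⟨Hp e rv, rv, hrv, rfl⟩ : Set.Nonempty {t | ∃ r : V, v ∈ H.ho b r ∧ t = Hp e r})
        (lt_of_lt_of_le hcon (min_le_right _ _))
      obtain ⟨z, hz, rfl⟩ := hs2mem
      have hxmem : x ∈ H.ho b (y + z) := by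
        rw [hsrd]; exact Set.mem_image2.mpr ⟨u, hy, v, hz, huv⟩
      have h1 : min (Gp e y) (Hp e z) ≤ smulP H b (sumP Gp Hp) e x :=
        le_trans (sumP_mem y z) (le_csSup hAbdd ⟨y + z, hxmem, rfl⟩)
      exact absurd h1 (not_le.mpr (lt_min hs1 hs2))
  · -- negative part
    apply le_antisymm
    · -- smulM of sum ≥ ... : here prove sumM side ≥? We prove ≤ first:
      have hAbdd : BddBelow {t | ∃ r : V, x ∈ H.ho b r ∧ t = sumM Gm Hm e r} :=
        ⟨-1, by rintro t ⟨r, _, rfl⟩; exact sumM_ge1 r⟩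
      refine le_csInf ⟨max (smulM H b Gm e x) (smulM H b Hm e 0), x, 0, add_zero x, rfl⟩ ?_
      rintro t ⟨u, v, huv, rfl⟩
      by_contra hcon
      push_neg at hcon
      obtain ⟨ru, hru⟩ := hex u
      obtain ⟨rv, hrv⟩ := hex v
      obtain ⟨s1, hs1mem, hs1⟩ := exists_lt_of_csInf_lt
        (⟨Gm e ru, ru, hru, rfl⟩ : Set.Nonempty {t | ∃ r : V, u ∈ H.ho b r ∧ t = Gm e r})
        (lt_of_le_of_lt (le_max_left _ _) hcon)
      obtain ⟨y, hy, rfl⟩ := hs1mem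
      obtain ⟨s2, hs2mem, hs2⟩ := exists_lt_of_csInf_lt
        (⟨Hm e rv, rv, hrv, rfl⟩ : Set.Nonempty {t | ∃ r : V, v ∈ H.ho b r ∧ t = Hm e r})
        (lt_of_le_of_lt (le_max_right _ _) hcon)
      obtain ⟨z, hz, rfl⟩ := hs2mem
      have hxmem : x ∈ H.ho b (y + z) := by
        rw [hsrd]; exact Set.mem_image2.mpr ⟨u, hy, v, hz, huv⟩
      have h1 : smulM H b (sumM Gm Hm) e x ≤ max (Gm e y) (Hm e z) :=
        le_trans (csInf_le hAbdd ⟨y + z, hxmem, rfl⟩) (sumM_mem y z)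
      exact absurd h1 (not_le.mpr (max_lt hs1 hs2))
    · -- sum of smulM ≤ smulM of sum
      obtain ⟨r₀, hr₀⟩ := hex x
      refine le_csInf ⟨sumM Gm Hm e r₀, r₀, hr₀, rfl⟩ ?_
      rintro t ⟨r, hr, rfl⟩
      refine le_csInf ⟨max (Gm e r) (Hm e 0), r, 0, add_zero r, rfl⟩ ?_
      rintro s ⟨y, z, hyz, rfl⟩
      have hx2 : x ∈ Set.image2 (· + ·) (H.ho b y) (H.ho b z) := by
        rw [← hsrd, hyz]; exact hr
      obtain ⟨u, hu, v, hv, huv⟩ := Set.mem_image2.mp hx2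
      have h1 : max (smulM H b Gm e u) (smulM H b Hm e v)
          ≤ max (Gm e y) (Hm e z) :=
        max_le_max (smulM_le Gm hGm1 u y hu) (smulM_le Hm hHm1 v z hv)
      refine le_trans (csInf_le ⟨-1, ?_⟩ ⟨u, v, huv, rfl⟩) h1
      rintro t ⟨u', v', _, rfl⟩
      exact le_trans (smulM_ge1 Gm hGm1 u') (le_max_left _ _)
end

section
/- Let V be a strongly left distributive hypervector space over K and (G,B) a bipolar fuzzy soft set of V. Then (G,B) is a bipolar fuzzy soft hypervector space of V if and only if for all e ∈ B, x,y ∈ V and a,b ∈ K: inf_{t ∈ a∘x + b∘y} G_e^+(t) ≥ min(G_e^+(x), G_e^+(y)) and sup_{t ∈ a∘x + b∘y} G_e^-(t) ≤ max(G_e^-(x), G_e^-(y)), where a∘x + b∘y = {t₁ + t₂ : t₁ ∈ a∘x, t₂ ∈ b∘y}. -/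
open Set Classical

variable {K V E : Type*}

theorem stmt_7 [Field K] [AddCommGroup V] (H : HVS K V)
    (hsld : ∀ (b c : K) (y : V), H.ho (b + c) y = Set.image2 (· + ·) (H.ho b y) (H.ho c y))
    (Gp Gm : E → V → ℝ) (hb : IsBFS Gp Gm) :
    IsBFSHVS H Gp Gm ↔
      ∀ (e : E) (x y : V) (a b : K),
        min (Gp e x) (Gp e y) ≤
          sInf (Gp e '' Set.image2 (· + ·) (H.ho a x) (H.ho b y)) ∧
        sSup (Gm e '' Set.image2 (· + ·) (H.ho a x) (H.ho b y)) ≤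
          max (Gm e x) (Gm e y) := by
  have bddP : ∀ (e : E) (S : Set V), BddBelow (Gp e '' S) := fun e S =>
    ⟨0, by rintro _ ⟨s, -, rfl⟩; exact (hb e s).1.1⟩
  have bddM : ∀ (e : E) (S : Set V), BddAbove (Gm e '' S) := fun e S =>
    ⟨0, by rintro _ ⟨s, -, rfl⟩; exact (hb e s).2.2⟩
  have hneg : ∀ (b : K) (y t : V), t ∈ H.ho b y → -t ∈ H.ho (-b) y := by
    intro b y t ht
    rw [H.h4b]
    simpa using ht
  constructor
  · rintro ⟨h1, h2, h3, h4⟩ e x y a b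
    have hGp_lb : ∀ (c : K) (w : V), ∀ r ∈ H.ho c w, Gp e w ≤ Gp e r := by
      intro c w r hr
      exact le_trans (h3 e c w) (csInf_le (bddP e _) ⟨r, hr, rfl⟩)
    have hGm_ub : ∀ (c : K) (w : V), ∀ r ∈ H.ho c w, Gm e r ≤ Gm e w := by
      intro c w r hr
      exact le_trans (le_csSup (bddM e _) ⟨r, hr, rfl⟩) (h4 e c w)
    obtain ⟨t1, ht1⟩ := H.ho_nonempty a x
    obtain ⟨t2, ht2⟩ := H.ho_nonempty b y
    have hne : (Set.image2 (· + ·) (H.ho a x) (H.ho b y)).Nonempty :=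
      ⟨t1 + t2, Set.mem_image2_of_mem ht1 ht2⟩
    constructor
    · refine le_csInf (hne.image _) ?_
      rintro _ ⟨s, hs, rfl⟩
      obtain ⟨u, hu, v, hv, rfl⟩ := Set.mem_image2.1 hs
      have hnv : -v ∈ H.ho (-b) y := hneg b y v hv
      calc min (Gp e x) (Gp e y)
          ≤ min (Gp e u) (Gp e (-v)) :=
            min_le_min (hGp_lb a x u hu) (hGp_lb (-b) y (-v) hnv)
        _ ≤ Gp e (u - -v) := h1 e u (-v)
        _ = Gp e (u + v) := by rw [sub_neg_eq_add]
    · refine csSup_le (hne.image _) ?_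
      rintro _ ⟨s, hs, rfl⟩
      obtain ⟨u, hu, v, hv, rfl⟩ := Set.mem_image2.1 hs
      have hnv : -v ∈ H.ho (-b) y := hneg b y v hv
      calc Gm e (u + v) = Gm e (u - -v) := by rw [sub_neg_eq_add]
        _ ≤ max (Gm e u) (Gm e (-v)) := h2 e u (-v)
        _ ≤ max (Gm e x) (Gm e y) :=
            max_le_max (hGm_ub a x u hu) (hGm_ub (-b) y (-v) hnv)
  · intro h
    refine ⟨?_, ?_, ?_, ?_⟩
    · intro e y z
      have hmem : y - z ∈ Set.image2 (· + ·) (H.ho 1 y) (H.ho (-1) z) := by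
        refine Set.mem_image2.2 ⟨y, H.h5 y, -z, hneg 1 z z (H.h5 z), ?_⟩
        rw [sub_eq_add_neg]
      exact le_trans (h e y z 1 (-1)).1 (csInf_le (bddP e _) ⟨y - z, hmem, rfl⟩)
    · intro e y z
      have hmem : y - z ∈ Set.image2 (· + ·) (H.ho 1 y) (H.ho (-1) z) := by
        refine Set.mem_image2.2 ⟨y, H.h5 y, -z, hneg 1 z z (H.h5 z), ?_⟩
        rw [sub_eq_add_neg]
      exact le_trans (le_csSup (bddM e _) ⟨y - z, hmem, rfl⟩) (h e y z 1 (-1)).2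
    · intro e b y
      have heq : H.ho b y = Set.image2 (· + ·) (H.ho b y) (H.ho 0 y) := by
        rw [← hsld b 0 y, add_zero]
      calc Gp e y = min (Gp e y) (Gp e y) := (min_self _).symm
        _ ≤ sInf (Gp e '' Set.image2 (· + ·) (H.ho b y) (H.ho 0 y)) := (h e y y b 0).1
        _ = sInf (Gp e '' H.ho b y) := by rw [← heq]
    · intro e b y
      have heq : H.ho b y = Set.image2 (· + ·) (H.ho b y) (H.ho 0 y) := by
        rw [← hsld b 0 y, add_zero]
      calc sSup (Gm e '' H.ho b y)
          = sSup (Gm e '' Set.image2 (· + ·) (H.ho b y) (H.ho 0 y)) := by rw [← heq]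
        _ ≤ max (Gm e y) (Gm e y) := (h e y y b 0).2
        _ = Gm e y := max_self _
end

section
/- Let V be a strongly left distributive hypervector space over K and (G,B) a bipolar fuzzy soft set of V. Then (G,B) is a bipolar fuzzy soft hypervector space of V if and only if for all b,c ∈ K, e ∈ B and x ∈ V: (b∘G + c∘G)_e^+(x) ≤ G_e^+(x) and (b∘G + c∘G)_e^-(x) ≥ G_e^-(x). -/
open Set Classical

variable {K V E : Type*}

section Aux
variable [Field K] [AddCommGroup V]

lemma neg_mem_ho_neg_one (H : HVS K V) (y : V) : -y ∈ H.ho (-1) y := by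
  rw [show ((-1:K)) = -(1:K) by ring, H.h4b]
  exact Set.neg_mem_neg.mpr (H.h5 y)

lemma zero_mem_ho_zero (H : HVS K V)
    (hsld : ∀ (b c : K) (y : V), H.ho (b + c) y = Set.image2 (· + ·) (H.ho b y) (H.ho c y))
    (y : V) : (0:V) ∈ H.ho 0 y := by
  have h := hsld 1 (-1) y
  rw [show (1 + (-1) : K) = 0 by ring] at h
  rw [h]
  exact ⟨y, H.h5 y, -y, neg_mem_ho_neg_one H y, by simp⟩

lemma smulP_le (H : HVS K V) {Gp : E → V → ℝ} {b : K} {e : E} {x : V} {a : ℝ}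
    (hGp : ∀ r, x ∈ H.ho b r → Gp e r ≤ a) (ha : 0 ≤ a) : smulP H b Gp e x ≤ a :=
  Real.sSup_le (by rintro t ⟨r, hr, rfl⟩; exact hGp r hr) ha

lemma le_smulP (H : HVS K V) {Gp : E → V → ℝ} {b : K} {e : E} {x r : V}
    (h1 : ∀ e x, Gp e x ≤ 1) (hr : x ∈ H.ho b r) : Gp e r ≤ smulP H b Gp e x :=
  le_csSup ⟨1, by rintro t ⟨s, hs, rfl⟩; exact h1 e s⟩ ⟨r, hr, rfl⟩

lemma le_smulM (H : HVS K V) {Gm : E → V → ℝ} {b : K} {e : E} {x : V} {a : ℝ}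
    (hGm : ∀ r, x ∈ H.ho b r → a ≤ Gm e r) (ha : a ≤ 0) : a ≤ smulM H b Gm e x :=
  Real.le_sInf (by rintro t ⟨r, hr, rfl⟩; exact hGm r hr) ha

lemma smulM_le (H : HVS K V) {Gm : E → V → ℝ} {b : K} {e : E} {x r : V}
    (h1 : ∀ e x, -1 ≤ Gm e x) (hr : x ∈ H.ho b r) : smulM H b Gm e x ≤ Gm e r :=
  csInf_le ⟨-1, by rintro t ⟨s, hs, rfl⟩; exact h1 e s⟩ ⟨r, hr, rfl⟩

end Aux

theorem stmt_8 [Field K] [AddCommGroup V] (H : HVS K V)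
    (hsld : ∀ (b c : K) (y : V), H.ho (b + c) y = Set.image2 (· + ·) (H.ho b y) (H.ho c y))
    (Gp Gm : E → V → ℝ) (hb : IsBFS Gp Gm) :
    IsBFSHVS H Gp Gm ↔
      ∀ (b c : K) (e : E) (x : V),
        sumP (smulP H b Gp) (smulP H c Gp) e x ≤ Gp e x ∧
        Gm e x ≤ sumM (smulM H b Gm) (smulM H c Gm) e x := by

  obtain ⟨hp01, hm01⟩ : (∀ e x, Gp e x ∈ Set.Icc (0:ℝ) 1) ∧ (∀ e x, Gm e x ∈ Set.Icc (-1:ℝ) 0) :=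
    ⟨fun e x => (hb e x).1, fun e x => (hb e x).2⟩
  have hp0 : ∀ e x, (0:ℝ) ≤ Gp e x := fun e x => (hp01 e x).1
  have hp1 : ∀ e x, Gp e x ≤ 1 := fun e x => (hp01 e x).2
  have hm1 : ∀ e x, (-1:ℝ) ≤ Gm e x := fun e x => (hm01 e x).1
  have hm0 : ∀ e x, Gm e x ≤ 0 := fun e x => (hm01 e x).2
  have hsmulP1 : ∀ (b : K) e (x : V), smulP H b Gp e x ≤ 1 :=
    fun b e x => smulP_le H (fun r _ => hp1 e r) zero_le_one
  have hsmulM1 : ∀ (b : K) e (x : V), -1 ≤ smulM H b Gm e x :=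
    fun b e x => le_smulM H (fun r _ => hm1 e r) (by norm_num)
  constructor
  · rintro ⟨c1, c2, c3, c4⟩ b c e x
    -- addition closure
    have haddP : ∀ e (y z : V), min (Gp e y) (Gp e z) ≤ Gp e (y + z) := by
      intro e y z
      have h0 : Gp e y ≤ Gp e 0 := by
        have := c1 e y y; simpa using this
      have hn : Gp e z ≤ Gp e (-z) := by
        have := c1 e 0 z
        simp only [zero_sub] at this
        exact le_trans (le_min (le_trans (by
          have := c1 e z z; simpa using this) le_rfl) le_rfl) this
      have := c1 e y (-z)
      rw [sub_neg_eq_add] at this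
      exact le_trans (min_le_min le_rfl hn) this
    have haddM : ∀ e (y z : V), Gm e (y + z) ≤ max (Gm e y) (Gm e z) := by
      intro e y z
      have h0 : Gm e 0 ≤ Gm e y := by
        have := c2 e y y; simpa using this
      have hn : Gm e (-z) ≤ Gm e z := by
        have := c2 e 0 z
        simp only [zero_sub] at this
        exact le_trans this (max_le (le_trans (by
          have := c2 e z z; simpa using this) le_rfl) le_rfl)
      have := c2 e y (-z)
      rw [sub_neg_eq_add] at this
      exact le_trans this (max_le_max le_rfl hn)
    have hPle : ∀ (b : K) e (y : V), smulP H b Gp e y ≤ Gp e y := by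
      intro b e y
      refine smulP_le H (fun r hr => ?_) (hp0 e y)
      refine le_trans (c3 e b r) (csInf_le ⟨0, ?_⟩ ⟨y, hr, rfl⟩)
      rintro t ⟨s, _, rfl⟩; exact hp0 e s
    have hMle : ∀ (b : K) e (y : V), Gm e y ≤ smulM H b Gm e y := by
      intro b e y
      refine le_smulM H (fun r hr => ?_) (hm0 e y)
      have hbdd : BddAbove (Gm e '' H.ho b r) := by
        refine ⟨0, ?_⟩; rintro t ⟨s, _, rfl⟩; exact hm0 e s
      exact le_trans (le_csSup hbdd ⟨y, hr, rfl⟩) (c4 e b r)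
    constructor
    · refine Real.sSup_le ?_ (hp0 e x)
      rintro t ⟨y, z, rfl, rfl⟩
      calc min (smulP H b Gp e y) (smulP H c Gp e z)
          ≤ min (Gp e y) (Gp e z) := min_le_min (hPle b e y) (hPle c e z)
        _ ≤ Gp e (y + z) := haddP e y z
    · refine Real.le_sInf ?_ (hm0 e x)
      rintro t ⟨y, z, rfl, rfl⟩
      calc Gm e (y + z) ≤ max (Gm e y) (Gm e z) := haddM e y z
        _ ≤ max (smulM H b Gm e y) (smulM H c Gm e z) :=
            max_le_max (hMle b e y) (hMle c e z)
  · intro hyp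
    have bddP : ∀ (b c : K) e (x : V), BddAbove
        {t | ∃ y z : V, y + z = x ∧ t = min (smulP H b Gp e y) (smulP H c Gp e z)} := by
      intro b c e x
      refine ⟨1, ?_⟩
      rintro t ⟨y, z, _, rfl⟩
      exact le_trans (min_le_left _ _) (hsmulP1 b e y)
    have bddM : ∀ (b c : K) e (x : V), BddBelow
        {t | ∃ y z : V, y + z = x ∧ t = max (smulM H b Gm e y) (smulM H c Gm e z)} := by
      intro b c e x
      refine ⟨-1, ?_⟩
      rintro t ⟨y, z, _, rfl⟩
      exact le_trans (hsmulM1 b e y) (le_max_left _ _)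
    refine ⟨?_, ?_, ?_, ?_⟩
    · intro e y z
      have key := (hyp 1 (-1) e (y - z)).1
      refine le_trans (le_trans ?_ (le_csSup (bddP 1 (-1) e (y - z))
        ⟨y, -z, by rw [← sub_eq_add_neg], rfl⟩)) key
      exact min_le_min (le_smulP H hp1 (H.h5 y)) (le_smulP H hp1 (neg_mem_ho_neg_one H z))
    · intro e y z
      have key := (hyp 1 (-1) e (y - z)).2
      refine le_trans key (le_trans (csInf_le (bddM 1 (-1) e (y - z))
        ⟨y, -z, by rw [← sub_eq_add_neg], rfl⟩) ?_)
      exact max_le_max (smulM_le H hm1 (H.h5 y)) (smulM_le H hm1 (neg_mem_ho_neg_one H z))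
    · intro e b y
      refine le_csInf ((H.ho_nonempty b y).image _) ?_
      rintro t ⟨q, hq, rfl⟩
      have key := (hyp b 0 e q).1
      refine le_trans (le_trans ?_ (le_csSup (bddP b 0 e q)
        ⟨q, 0, by rw [add_zero], rfl⟩)) key
      exact le_min (le_smulP H hp1 hq) (le_smulP H hp1 (zero_mem_ho_zero H hsld y))
    · intro e b y
      refine csSup_le ((H.ho_nonempty b y).image _) ?_
      rintro t ⟨q, hq, rfl⟩
      have key := (hyp b 0 e q).2
      refine le_trans key (le_trans (csInf_le (bddM b 0 e q)
        ⟨q, 0, by rw [add_zero], rfl⟩) ?_)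
      exact max_le (smulM_le H hm1 hq) (smulM_le H hm1 (zero_mem_ho_zero H hsld y))
end

section
/- Let V be a hypervector space over K, X ⊆ V a nonempty subset, and B a nonempty parameter set. Define (H,B) by H_e^+(x) = 0 for all x, and H_e^-(x) = −1 if x ∈ X, H_e^-(x) = 0 otherwise. Then X is a subhyperspace of V if and only if (H,B) is a bipolar fuzzy soft hypervector space of V. -/
open Set Classical

variable {K V E : Type*}

theorem stmt_10 [Field K] [AddCommGroup V] [Nonempty E] (H : HVS K V)
    (X : Set V) (hX : X.Nonempty) :
    IsSHS H X ↔
      IsBFSHVS H (fun (_ : E) (_ : V) => (0:ℝ))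
        (fun (_ : E) (x : V) => X.indicator (fun _ => (-1:ℝ)) x) := by
  set Gm : V → ℝ := fun x => X.indicator (fun _ => (-1:ℝ)) x with hGm
  have hle0 : ∀ x, Gm x ≤ 0 := by
    intro x; by_cases h : x ∈ X <;> simp [Gm, Set.indicator, h]
  have hmem : ∀ x, Gm x ≤ -1 ↔ x ∈ X := by
    intro x; by_cases h : x ∈ X <;> simp [Gm, Set.indicator, h]
  constructor
  · rintro ⟨hsub, hsm⟩
    refine ⟨?_, ?_, ?_, ?_⟩
    · intro e y z; simp
    · intro e y z
      by_cases hy : y ∈ X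
      · by_cases hz : z ∈ X
        · have := hsub y hy z hz
          simp [Gm, Set.indicator, this, hy, hz]
        · have hz0 : Gm z = 0 := by simp [Gm, Set.indicator, hz]
          exact le_max_of_le_right ((hle0 (y - z)).trans hz0.ge)
      · have hy0 : Gm y = 0 := by simp [Gm, Set.indicator, hy]
        exact le_max_of_le_left ((hle0 (y - z)).trans hy0.ge)
    · intro e b y
      have hne := H.ho_nonempty b y
      apply le_csInf (hne.image _)
      rintro t ⟨r, hr, rfl⟩; exact le_refl 0
    · intro e b y
      have hne := H.ho_nonempty b y
      apply csSup_le (hne.image _)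
      rintro t ⟨r, hr, rfl⟩
      by_cases hy : y ∈ X
      · have hrX : r ∈ X := hsm y hy b hr
        simp [Gm, Set.indicator, hrX, hy]
      · calc Gm r ≤ 0 := hle0 r
          _ = Gm y := by simp [Gm, Set.indicator, hy]
  · rintro ⟨-, h2, -, h4⟩
    have e : E := Classical.arbitrary E
    constructor
    · intro x hx y hy
      have := h2 e x y
      rw [← hmem]
      refine this.trans ?_
      simp [Gm, Set.indicator, hx, hy]
    · intro x hx b r hr
      have hb : BddAbove ((fun x => Gm x) '' H.ho b x) := by
        refine ⟨0, ?_⟩; rintro t ⟨s, hs, rfl⟩; exact hle0 s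
      have hle : Gm r ≤ sSup ((fun x => Gm x) '' H.ho b x) :=
        le_csSup hb ⟨r, hr, rfl⟩
      have : Gm r ≤ -1 := by
        refine hle.trans ((h4 e b x).trans ?_)
        simp [Gm, Set.indicator, hx]
      exact (hmem r).1 this
end
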